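/- If a function τ: ℤ⁴ → ℂ* satisfies the discrete BKP equation τ·τ_ijk − τ_i·τ_jk + τ_j·τ_ik − τ_k·τ_ij = 0 on every elementary 3-cube for all 1 ≤ i < j < k ≤ 4 (with subscripts denoting unit shifts in the corresponding lattice directions), then the four-dimensionally consistent value τ_1234 satisfies τ·τ_1234 − τ_12·τ_34 + τ_13·τ_24 − τ_14·τ_23 = 0; in particular τ_1234 = (τ_12·τ_34 − τ_13·τ_24 + τ_14·τ_23)/τ does not depend on the values τ_1, τ_2, τ_3, τ_4. Concretely: given sixteen nonzero complex numbers τ, τ_i (1≤i≤4), τ_ij (1≤i<j≤4), τ_1234-candidates determined by the BKP equation on the four 3-faces containing the vertex 1234, all four candidates coincide and equal (τ_12·τ_34 − τ_13·τ_24 + τ_14·τ_23)/τ. -/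
import Mathlib

/-- Four-dimensional consistency of the discrete BKP equation: given nonzero
initial data `τ`, `τ_i`, `τ_ij` on a hypercube, with `τ_ijk` determined by the
discrete BKP equation `τ·τ_ijk − τ_i·τ_jk + τ_j·τ_ik − τ_k·τ_ij = 0` on the
four 3-cubes adjacent to the initial vertex, the four candidate values for
`τ_1234` obtained from the BKP equation on the four 3-faces containing the
vertex `1234` all coincide and equal
`(τ_12·τ_34 − τ_13·τ_24 + τ_14·τ_23)/τ`; in particular `τ_1234` does not depend
on `τ_1, τ_2, τ_3, τ_4`. -/
theorem discrete_BKP_four_dimensional_consistency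
    (τ τ1 τ2 τ3 τ4 τ12 τ13 τ14 τ23 τ24 τ34 τ123 τ124 τ134 τ234 : ℂ)
    (hτ : τ ≠ 0) (hτ1 : τ1 ≠ 0) (hτ2 : τ2 ≠ 0) (hτ3 : τ3 ≠ 0) (hτ4 : τ4 ≠ 0)
    (h123 : τ * τ123 - τ1 * τ23 + τ2 * τ13 - τ3 * τ12 = 0)
    (h124 : τ * τ124 - τ1 * τ24 + τ2 * τ14 - τ4 * τ12 = 0)
    (h134 : τ * τ134 - τ1 * τ34 + τ3 * τ14 - τ4 * τ13 = 0)
    (h234 : τ * τ234 - τ2 * τ34 + τ3 * τ24 - τ4 * τ23 = 0) :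
    (τ12 * τ134 - τ13 * τ124 + τ14 * τ123) / τ1 =
      (τ12 * τ34 - τ13 * τ24 + τ14 * τ23) / τ ∧
    (τ12 * τ234 - τ23 * τ124 + τ24 * τ123) / τ2 =
      (τ12 * τ34 - τ13 * τ24 + τ14 * τ23) / τ ∧
    (τ13 * τ234 - τ23 * τ134 + τ34 * τ123) / τ3 =
      (τ12 * τ34 - τ13 * τ24 + τ14 * τ23) / τ ∧
    (τ14 * τ234 - τ24 * τ134 + τ34 * τ124) / τ4 =
      (τ12 * τ34 - τ13 * τ24 + τ14 * τ23) / τ := by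
  refine ⟨?_, ?_, ?_, ?_⟩ <;> rw [div_eq_div_iff (by assumption) hτ]
  · linear_combination τ12 * h134 - τ13 * h124 + τ14 * h123
  · linear_combination τ12 * h234 - τ23 * h124 + τ24 * h123
  · linear_combination τ13 * h234 - τ23 * h134 + τ34 * h123
  · linear_combination τ14 * h234 - τ24 * h134 + τ34 * h124
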